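/- Let c ≥ 1, let u ∈ F_2^c be a vector and W ∈ F_2^{c×c} a matrix with W ≠ u·u^⊤. If r, r' ∈ F_2^c are drawn independently and uniformly at random, then Pr[r^⊤ W r' ≠ (r^⊤ u)·(r'^⊤ u)] ≥ 1/4. -/

import Mathlib

open scoped Classical

/-- The probability that a uniformly random element of a finite type `Ω`
satisfies the predicate `P`. -/
noncomputable def prob {Ω : Type*} [Fintype Ω] (P : Ω → Prop) : ℝ :=
  ((Finset.univ.filter P).card : ℝ) / (Fintype.card Ω : ℝ)

open Finset

lemma half_card {n : ℕ} {β : Type*} [AddCommGroup β]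
    (φ : (Fin n → ZMod 2) → β)
    (hφ : ∀ x y, φ (x + y) = φ x + φ y)
    (r0 : Fin n → ZMod 2) (h0 : φ r0 ≠ 0) :
    2 ^ (n - 1) ≤ (univ.filter (fun r => φ r ≠ 0)).card := by
  have hn : 1 ≤ n := by
    by_contra h
    have hn0 : n = 0 := by omega
    subst hn0
    have hr00 : r0 = 0 := funext fun i => absurd i.2 (by omega)
    apply h0
    rw [hr00]
    have := hφ 0 0
    simpa using this
  have hle : (univ.filter (fun r => φ r = 0)).card ≤
      (univ.filter (fun r => φ r ≠ 0)).card := by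
    apply Finset.card_le_card_of_injOn (fun r => r + r0)
    · intro r hr
      simp only [mem_coe, mem_filter, mem_univ, true_and] at hr ⊢
      rw [hφ, hr, zero_add]
      exact h0
    · intro a _ b _ hab
      exact add_right_cancel hab
  have htot : (univ.filter (fun r => φ r = 0)).card +
      (univ.filter (fun r => φ r ≠ 0)).card = 2 ^ n := by
    rw [Finset.card_filter_add_card_filter_not]
    simp [Fintype.card_fun]
  have h2 : 2 ^ n = 2 ^ (n - 1) * 2 := by
    rw [← pow_succ]; congr 1; omega
  omega

/-- **Tensor-test soundness** (used for test (P6) in Lemma 5.3): if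
`W ∈ F₂^{c×c}` differs from the outer product `u·uᵀ`, then independent
uniformly random `r, r' ∈ F₂^c` satisfy `rᵀ W r' ≠ (rᵀu)·(r'ᵀu)` with
probability at least `1/4`. -/
theorem tensor_test_soundness {c : ℕ} (hc : 1 ≤ c)
    (u : Fin c → ZMod 2) (W : Matrix (Fin c) (Fin c) (ZMod 2))
    (hW : W ≠ Matrix.vecMulVec u u) :
    prob (fun x : (Fin c → ZMod 2) × (Fin c → ZMod 2) =>
        (∑ i, ∑ j, x.1 i * W i j * x.2 j)
          ≠ (∑ i, x.1 i * u i) * (∑ j, x.2 j * u j))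
      ≥ 1 / 4 := by
  set M : Matrix (Fin c) (Fin c) (ZMod 2) := fun i j => W i j - u i * u j with hMdef
  set g : (Fin c → ZMod 2) → (Fin c → ZMod 2) :=
    fun r => fun j => ∑ i, r i * M i j with hgdef
  -- rewrite the predicate
  have e : ∀ r r' : Fin c → ZMod 2,
      ∑ j, g r j * r' j
        = (∑ i, ∑ j, r i * W i j * r' j) - (∑ i, r i * u i) * (∑ j, r' j * u j) := by
    intro r r'
    rw [Finset.sum_mul_sum, ← Finset.sum_sub_distrib]
    simp only [hgdef, hMdef, Finset.sum_mul]
    rw [Finset.sum_comm]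
    refine Finset.sum_congr rfl fun i _ => ?_
    rw [← Finset.sum_sub_distrib]
    refine Finset.sum_congr rfl fun j _ => ?_
    ring
  have epred : ∀ x : (Fin c → ZMod 2) × (Fin c → ZMod 2),
      ((∑ i, ∑ j, x.1 i * W i j * x.2 j)
          ≠ (∑ i, x.1 i * u i) * (∑ j, x.2 j * u j))
        ↔ (∑ j, g x.1 j * x.2 j ≠ 0) := by
    intro x
    rw [e]
    exact (sub_ne_zero).symm
  -- M nonzero
  obtain ⟨i0, j0, hij⟩ : ∃ i0 j0, M i0 j0 ≠ 0 := by
    by_contra h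
    push_neg at h
    apply hW
    ext i j
    have := h i j
    rw [hMdef] at this
    simpa [Matrix.vecMulVec, sub_eq_zero] using this
  -- g is additive
  have hgadd : ∀ x y, g (x + y) = g x + g y := by
    intro x y
    funext j
    simp [hgdef, add_mul, Finset.sum_add_distrib]
  -- many r with g r ≠ 0
  have hg : 2 ^ (c - 1) ≤ (univ.filter (fun r => g r ≠ 0)).card := by
    have h0 : g (Pi.single i0 1) ≠ 0 := by
      intro h
      apply hij
      have := congrFun h j0
      simp only [hgdef, Pi.zero_apply] at this
      rw [← this]
      rw [Finset.sum_eq_single i0]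
      · simp
      · intro b _ hb; simp [Pi.single_apply, hb]
      · simp
    have := half_card g hgadd (Pi.single i0 1) h0
    convert this using 2
    congr!
  -- for each such r, many r'
  have hr' : ∀ r : Fin c → ZMod 2, g r ≠ 0 →
      2 ^ (c - 1) ≤ (univ.filter (fun r' : Fin c → ZMod 2 => ∑ j, g r j * r' j ≠ 0)).card := by
    intro r hr
    obtain ⟨j1, hj1⟩ := Function.ne_iff.mp hr
    have h0 : ∑ j, g r j * (Pi.single j1 1 : Fin c → ZMod 2) j ≠ 0 := by
      intro h
      apply hj1
      simp only [Pi.zero_apply]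
      rw [← h, Finset.sum_eq_single j1]
      · simp
      · intro b _ hb; simp [Pi.single_apply, hb]
      · simp
    have := half_card (fun r' => ∑ j, g r j * r' j)
      (by intro x y; simp [mul_add, Finset.sum_add_distrib]) (Pi.single j1 1) h0
    convert this using 2
    congr!
  -- count the good pairs
  set P : (Fin c → ZMod 2) × (Fin c → ZMod 2) → Prop :=
    fun x => (∑ i, ∑ j, x.1 i * W i j * x.2 j)
          ≠ (∑ i, x.1 i * u i) * (∑ j, x.2 j * u j) with hP
  have hcount : 2 ^ (c - 1) * 2 ^ (c - 1) ≤ (univ.filter P).card := by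
    have hsplit : (univ.filter P).card
        = ∑ r : Fin c → ZMod 2,
            (univ.filter (fun r' : Fin c → ZMod 2 => ∑ j, g r j * r' j ≠ 0)).card := by
      rw [Finset.card_filter, Fintype.sum_prod_type]
      refine Finset.sum_congr rfl fun r _ => ?_
      rw [Finset.card_filter]
      refine Finset.sum_congr rfl fun r' _ => ?_
      congr 1
      exact propext (epred (r, r'))
    rw [hsplit]
    calc 2 ^ (c - 1) * 2 ^ (c - 1)
        ≤ (univ.filter (fun r => g r ≠ 0)).card * 2 ^ (c - 1) :=
          Nat.mul_le_mul_right _ hg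
      _ = ∑ r ∈ univ.filter (fun r => g r ≠ 0), 2 ^ (c - 1) := by
          rw [Finset.sum_const, smul_eq_mul]
      _ ≤ ∑ r ∈ univ.filter (fun r => g r ≠ 0),
            (univ.filter (fun r' : Fin c → ZMod 2 => ∑ j, g r j * r' j ≠ 0)).card := by
          refine Finset.sum_le_sum fun r hr => ?_
          exact hr' r (by simpa using hr)
      _ ≤ ∑ r : Fin c → ZMod 2,
            (univ.filter (fun r' : Fin c → ZMod 2 => ∑ j, g r j * r' j ≠ 0)).card :=
          Finset.sum_le_sum_of_subset (Finset.filter_subset _ _)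
  -- conclude
  have hcard : (Fintype.card ((Fin c → ZMod 2) × (Fin c → ZMod 2)))
      = 4 * (2 ^ (c - 1) * 2 ^ (c - 1)) := by
    have h2 : (2 : ℕ) ^ c = 2 * 2 ^ (c - 1) := by
      rw [← pow_succ']; congr 1; omega
    simp only [Fintype.card_prod, Fintype.card_fun, ZMod.card, Fintype.card_fin]
    rw [h2]; ring
  rw [ge_iff_le]
  unfold prob
  rw [le_div_iff₀ (by rw [hcard]; positivity), hcard]
  push_cast
  have hle : ((2:ℝ) ^ (c-1) * 2 ^ (c-1)) ≤ ((univ.filter P).card : ℝ) := by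
    exact_mod_cast hcount
  have heq : (1/4:ℝ) * (4 * ((2:ℝ)^(c-1) * 2^(c-1))) = (2:ℝ)^(c-1) * 2^(c-1) := by
    ring
  rw [heq]
  refine le_trans hle (le_of_eq ?_)
  congr!
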